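/- The identity operator from the column Hilbertian H_c to the row Hilbertian H_r of an infinite-dimensional Hilbert space H is not completely bounded, although it is an isometry of the underlying normed spaces. -/

import Mathlib

open scoped InnerProductSpace

/-- In an infinite-dimensional inner product space there is an orthonormal family of
any finite size. -/
lemma exists_orthonormal_of_infiniteDimensional
    {E : Type*} [NormedAddCommGroup E] [InnerProductSpace ℂ E]
    (hE : ¬ FiniteDimensional ℂ E) (n : ℕ) : ∃ v : Fin n → E, Orthonormal ℂ v := by
  have hrank : (n : Cardinal) ≤ Module.rank ℂ E := by
    have h0 : ¬ (Module.rank ℂ E < Cardinal.aleph0) := fun h =>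
      hE (Module.rank_lt_aleph0_iff.mp h)
    exact le_trans (Cardinal.nat_lt_aleph0 n).le (le_of_not_gt h0)
  obtain ⟨f, hf⟩ := exists_linearIndependent_of_le_rank hrank
  let S : Submodule ℂ E := Submodule.span ℂ (Set.range f)
  haveI : FiniteDimensional ℂ S := FiniteDimensional.span_of_finite ℂ (Set.finite_range f)
  have hdim : Module.finrank ℂ S = n := by
    rw [finrank_span_eq_card hf, Fintype.card_fin]
  let b := (stdOrthonormalBasis ℂ S).reindex (finCongr hdim)
  refine ⟨fun k => (b k : E), ?_⟩
  have hb := b.orthonormal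
  rw [orthonormal_iff_ite] at hb ⊢
  intro i j
  rw [← Submodule.coe_inner]
  exact hb i j

open ContinuousLinearMap in
/-- The identity operator `1 : H_c → H_r` (`H` infinite-dimensional) is an isometry of
the underlying normed spaces but is not completely bounded.  An element of `KH` is
represented as `Σₖ aₖ ⊗ eₖ` with `aₖ ∈ K(L)` and `(eₖ)` orthonormal in `H`; its norm
in `KH_c` is `‖Σₖ aₖ* aₖ‖^{1/2}` and in `KH_r` is `‖Σₖ aₖ aₖ*‖^{1/2}`.  The first
conjunct (the C*-identity `‖a* a‖ = ‖a a*‖`) says the underlying norms coincide, and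
the second says that no constant `C` bounds the amplification `1_∞ : KH_c → KH_r`. -/
theorem identity_column_to_row_not_cb
    {L : Type*} [NormedAddCommGroup L] [InnerProductSpace ℂ L] [CompleteSpace L]
    {H : Type*} [NormedAddCommGroup H] [InnerProductSpace ℂ H]
    (hL : ¬ FiniteDimensional ℂ L) (hH : ¬ FiniteDimensional ℂ H) :
    (∀ a : L →L[ℂ] L, ‖adjoint a ∘L a‖ = ‖a ∘L adjoint a‖) ∧
    ¬ ∃ C : ℝ, ∀ (n : ℕ) (a : Fin n → (L →L[ℂ] L)) (e : Fin n → H),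
      (∀ k, IsCompactOperator (a k)) → Orthonormal ℂ e →
      Real.sqrt ‖∑ k, a k ∘L adjoint (a k)‖ ≤
        C * Real.sqrt ‖∑ k, adjoint (a k) ∘L a k‖ := by
  constructor
  · intro a
    calc ‖adjoint a ∘L a‖ = ‖a‖ * ‖a‖ := norm_adjoint_comp_self a
      _ = ‖adjoint a‖ * ‖adjoint a‖ := by rw [LinearIsometryEquiv.norm_map]
      _ = ‖adjoint (adjoint a) ∘L adjoint a‖ := (norm_adjoint_comp_self _).symm
      _ = ‖a ∘L adjoint a‖ := by rw [adjoint_adjoint]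
  · rintro ⟨C, hC⟩
    set m : ℕ := ⌈C⌉₊ + 1 with hm
    set n : ℕ := m ^ 2 with hn
    have hnpos : 0 < n := by positivity
    obtain ⟨v, hv⟩ := exists_orthonormal_of_infiniteDimensional hL n
    obtain ⟨e, he⟩ := exists_orthonormal_of_infiniteDimensional hH n
    set z : Fin n := ⟨0, hnpos⟩ with hz
    have hvi := orthonormal_iff_ite.mp hv
    -- the rank-one operators a_k = |v 0⟩⟨v k|
    set A : Fin n → (L →L[ℂ] L) := fun k => (innerSL ℂ (v k)).smulRight (v z) with hA
    have hAapp : ∀ k x, A k x = ⟪v k, x⟫_ℂ • v z := fun k x => rfl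
    -- compactness
    have hcompact : ∀ k, IsCompactOperator (A k) := by
      intro k
      refine ⟨(fun c : ℂ => c • v z) '' Metric.closedBall 0 1,
        (isCompact_closedBall 0 1).image (continuous_id.smul continuous_const), ?_⟩
      refine Filter.mem_of_superset (Metric.closedBall_mem_nhds (0 : L) one_pos) ?_
      intro x hx
      refine ⟨⟪v k, x⟫_ℂ, ?_, rfl⟩
      rw [Metric.mem_closedBall, dist_zero_right]
      calc ‖⟪v k, x⟫_ℂ‖ ≤ ‖v k‖ * ‖x‖ := norm_inner_le_norm _ _
        _ ≤ 1 * 1 := by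
            have := hv.1 k
            have hx1 : ‖x‖ ≤ 1 := by simpa [dist_zero_right] using hx
            exact mul_le_mul (le_of_eq this) hx1 (norm_nonneg _) zero_le_one
        _ = 1 := one_mul 1
    -- adjoints
    have hadj : ∀ k, adjoint (A k) = (innerSL ℂ (v z)).smulRight (v k) := by
      intro k
      symm
      rw [eq_adjoint_iff]
      intro x y
      simp [hA, inner_smul_left, inner_smul_right]
      ring
    -- column sum: ∑ a_k* a_k = projection, norm ≤ 1
    have hcol : ‖∑ k, adjoint (A k) ∘L A k‖ ≤ 1 := by
      refine opNorm_le_bound _ zero_le_one fun x => ?_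
      rw [one_mul, ContinuousLinearMap.sum_apply]
      have happ : ∀ k, (adjoint (A k) ∘L A k) x = ⟪v k, x⟫_ℂ • v k := by
        intro k
        rw [ContinuousLinearMap.comp_apply, hadj k, hAapp]
        simp [inner_smul_right, hvi z z, hv.1 z]
      rw [Finset.sum_congr rfl fun k _ => happ k]
      -- ‖∑ ⟪v k, x⟫ • v k‖ ≤ ‖x‖ by Bessel
      have hsq : ‖∑ k, ⟪v k, x⟫_ℂ • v k‖ ^ 2 ≤ ‖x‖ ^ 2 := by
        have h1 : (⟪∑ k, ⟪v k, x⟫_ℂ • v k, ∑ k, ⟪v k, x⟫_ℂ • v k⟫_ℂ)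
            = ∑ k, (starRingEnd ℂ) ⟪v k, x⟫_ℂ * ⟪v k, x⟫_ℂ := hv.inner_sum _ _ _
        have h2 : ‖∑ k, ⟪v k, x⟫_ℂ • v k‖ ^ 2
            = ∑ k, ‖⟪v k, x⟫_ℂ‖ ^ 2 := by
          rw [← inner_self_eq_norm_sq (𝕜 := ℂ), h1]
          simp only [RCLike.conj_mul, ← RCLike.ofReal_pow, ← RCLike.ofReal_sum,
            RCLike.ofReal_re]
        rw [h2]
        exact hv.sum_inner_products_le x
      have := Real.sqrt_le_sqrt hsq
      rwa [Real.sqrt_sq (norm_nonneg _), Real.sqrt_sq (norm_nonneg _)] at this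
    -- row sum: ∑ a_k a_k* has norm ≥ n
    have hrow : (n : ℝ) ≤ ‖∑ k, A k ∘L adjoint (A k)‖ := by
      have happ : ∀ k, (A k ∘L adjoint (A k)) (v z) = v z := by
        intro k
        rw [ContinuousLinearMap.comp_apply, hadj k]
        simp [hAapp, inner_smul_right, hvi z z, hvi k k, hv.1 z, hv.1 k]
      have hTv : (∑ k, A k ∘L adjoint (A k)) (v z) = (n : ℂ) • v z := by
        rw [ContinuousLinearMap.sum_apply, Finset.sum_congr rfl fun k _ => happ k]
        simp [Finset.sum_const, Nat.cast_smul_eq_nsmul]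
      have hb := (∑ k, A k ∘L adjoint (A k)).le_opNorm (v z)
      rw [hTv, norm_smul, hv.1 z] at hb
      simpa [hv.1 z] using hb
    -- contradiction
    have hmain := hC n A e hcompact he
    have hcolsqrt : Real.sqrt ‖∑ k, adjoint (A k) ∘L A k‖ ≤ 1 := by
      have := Real.sqrt_le_sqrt hcol
      simpa using this
    have hrowsqrt : (m : ℝ) ≤ Real.sqrt ‖∑ k, A k ∘L adjoint (A k)‖ := by
      have h1 : Real.sqrt ((n : ℝ)) = m := by
        rw [hn]
        push_cast
        exact Real.sqrt_sq (by positivity)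
      calc (m : ℝ) = Real.sqrt n := h1.symm
        _ ≤ _ := Real.sqrt_le_sqrt hrow
    have hCm : C * Real.sqrt ‖∑ k, adjoint (A k) ∘L A k‖ < m := by
      have hceil : C ≤ (⌈C⌉₊ : ℝ) := Nat.le_ceil C
      have hs0 : (0 : ℝ) ≤ Real.sqrt ‖∑ k, adjoint (A k) ∘L A k‖ := Real.sqrt_nonneg _
      have hmlt : ((⌈C⌉₊ : ℝ)) < m := by
        rw [hm]; push_cast; linarith
      nlinarith [hcolsqrt, hs0, hceil]
    linarith [hmain, hrowsqrt, hCm]
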